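/- In a tuple-independent probabilistic database, let t_i and t_j be distinct tuples such that t_i is ranked above t_j by top-1 probability but below t_j by existence probability, i.e., Pr(r(t_i)=1) > Pr(r(t_j)=1) and p_i < p_j, where Pr(r(t_i)=1) = p_i·∏_{l<i}(1−p_l). Then there exists exactly one β ∈ (0,1) such that Υ_β(t_i) = Υ_β(t_j); moreover Υ_α(t_i) > Υ_α(t_j) for all α ∈ (0,β) and Υ_α(t_i) < Υ_α(t_j) for all α ∈ (β,1]. -/

import Mathlib

/-- The probability of the possible world `W` in a tuple-independent probabilistic
database whose tuple `t_l` exists independently with probability `p l`. -/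
noncomputable def worldProb (n : ℕ) (p : Fin n → ℝ) (W : Finset (Fin n)) : ℝ :=
  (∏ l ∈ W, p l) * ∏ l ∈ Wᶜ, (1 - p l)

/-- The positional probability `Pr(r(t_i) = j)`: the total probability of possible worlds `W`
with `i ∈ W` in which exactly `j - 1` tuples with higher score (i.e. smaller index) than `t_i`
are present, where the tuples `t_1, …, t_n` are listed in strictly decreasing score order. -/
noncomputable def posProb (n : ℕ) (p : Fin n → ℝ) (i : Fin n) (j : ℕ) : ℝ :=
  ∑ W ∈ Finset.univ.filter (fun W : Finset (Fin n) =>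
      i ∈ W ∧ (W.filter (fun l => l < i)).card + 1 = j), worldProb n p W

/-- The `PRF^e` value of tuple `t_i`: `Υ_α(t_i) = Σ_{j=1}^n α^j · Pr(r(t_i) = j)`. -/
noncomputable def prfe (n : ℕ) (p : Fin n → ℝ) (i : Fin n) (α : ℝ) : ℝ :=
  ∑ j ∈ Finset.Icc 1 n, α ^ j * posProb n p i j

/-- Master factorization lemma: sums over worlds containing `i` with multiplicative weights
on the elements below `i` factor into a product. -/
lemma prfe_master {n : ℕ} (p : Fin n → ℝ) (i : Fin n) (c : Fin n → ℝ) :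
    ∑ W ∈ Finset.univ.filter (fun W : Finset (Fin n) => i ∈ W),
      (∏ l ∈ W.filter (fun l => l < i), c l) * worldProb n p W
    = p i * ∏ l ∈ Finset.univ.filter (fun l => l < i), (p l * c l + (1 - p l)) := by
  classical
  have key : ∀ W : Finset (Fin n), i ∈ W →
      (∏ l ∈ W.filter (fun l => l < i), c l) * worldProb n p W
      = p i * ((∏ l ∈ W.erase i, (p l * (if l < i then c l else 1)))
          * ∏ l ∈ (Finset.univ.erase i) \ (W.erase i), (1 - p l)) := by
    intro W hW
    have h1 : W.filter (fun l => l < i) = (W.erase i).filter (fun l => l < i) := by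
      ext l
      simp only [Finset.mem_filter, Finset.mem_erase]
      constructor
      · rintro ⟨hl, hlt⟩; exact ⟨⟨ne_of_lt hlt, hl⟩, hlt⟩
      · rintro ⟨⟨_, hl⟩, hlt⟩; exact ⟨hl, hlt⟩
    have h2 : Wᶜ = (Finset.univ.erase i) \ (W.erase i) := by
      ext l
      simp only [Finset.mem_compl, Finset.mem_sdiff, Finset.mem_erase, Finset.mem_univ,
        and_true]
      constructor
      · intro hl
        refine ⟨fun h => hl (h ▸ hW), fun h => hl h.2⟩
      · rintro ⟨hne, h⟩ hlW
        exact h ⟨hne, hlW⟩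
    rw [worldProb, h1, h2, ← Finset.mul_prod_erase W p hW, Finset.prod_filter,
      Finset.prod_mul_distrib]
    ring
  rw [Finset.sum_nbij' (i := fun W : Finset (Fin n) => W.erase i)
      (j := fun t : Finset (Fin n) => insert i t)
      (t := (Finset.univ.erase i).powerset)
      (g := fun t => p i * ((∏ l ∈ t, (p l * (if l < i then c l else 1)))
          * ∏ l ∈ (Finset.univ.erase i) \ t, (1 - p l)))
      (hi := fun W _ => Finset.mem_powerset.mpr
        (Finset.erase_subset_erase i (Finset.subset_univ W)))
      (hj := fun t _ => Finset.mem_filter.mpr ⟨Finset.mem_univ _, Finset.mem_insert_self i t⟩)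
      (left_neg := fun W hW => Finset.insert_erase (Finset.mem_filter.mp hW).2)
      (right_neg := fun t ht => Finset.erase_insert
        (fun hit => ((Finset.mem_erase.mp ((Finset.mem_powerset.mp ht) hit)).1 rfl)))
      (h := fun W hW => key W (Finset.mem_filter.mp hW).2)]
  rw [← Finset.mul_sum, ← Finset.prod_add]
  congr 1
  rw [← Finset.prod_filter_mul_prod_filter_not (Finset.univ.erase i) (fun l => l < i)]
  have hset : (Finset.univ.erase i).filter (fun l => l < i)
      = Finset.univ.filter (fun l => l < i) := by
    ext l
    simp only [Finset.mem_filter, Finset.mem_erase, Finset.mem_univ, true_and, and_true]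
    constructor
    · rintro ⟨_, h⟩; exact h
    · intro h; exact ⟨ne_of_lt h, h⟩
  rw [hset]
  have h1 : ∏ l ∈ Finset.univ.filter (fun l => l < i),
      (p l * (if l < i then c l else 1) + (1 - p l))
      = ∏ l ∈ Finset.univ.filter (fun l => l < i), (p l * c l + (1 - p l)) := by
    apply Finset.prod_congr rfl
    intro l hl
    rw [if_pos (Finset.mem_filter.mp hl).2]
  have h2 : ∏ l ∈ (Finset.univ.erase i).filter (fun l => ¬ l < i),
      (p l * (if l < i then c l else 1) + (1 - p l)) = 1 := by
    apply Finset.prod_eq_one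
    intro l hl
    rw [if_neg (Finset.mem_filter.mp hl).2]
    ring
  rw [h1, h2, mul_one]

lemma posProb_one {n : ℕ} (p : Fin n → ℝ) (i : Fin n) :
    posProb n p i 1 = p i * ∏ l ∈ Finset.univ.filter (fun l => l < i), (1 - p l) := by
  classical
  have h := prfe_master p i (fun _ => (0 : ℝ))
  rw [posProb]
  have e1 : Finset.univ.filter (fun W : Finset (Fin n) =>
        i ∈ W ∧ (W.filter (fun l => l < i)).card + 1 = 1)
      = (Finset.univ.filter (fun W : Finset (Fin n) => i ∈ W)).filter
          (fun W => W.filter (fun l => l < i) = ∅) := by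
    rw [Finset.filter_filter]
    apply Finset.filter_congr
    intro W _
    constructor
    · rintro ⟨h1, h2⟩; exact ⟨h1, Finset.card_eq_zero.mp (by omega)⟩
    · rintro ⟨h1, h2⟩; exact ⟨h1, by rw [h2]; simp⟩
  rw [e1, Finset.sum_filter]
  calc ∑ W ∈ Finset.univ.filter (fun W : Finset (Fin n) => i ∈ W),
        (if W.filter (fun l => l < i) = ∅ then worldProb n p W else 0)
      = ∑ W ∈ Finset.univ.filter (fun W : Finset (Fin n) => i ∈ W),
        (∏ l ∈ W.filter (fun l => l < i), (0 : ℝ)) * worldProb n p W := by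
        apply Finset.sum_congr rfl
        intro W _
        rw [Finset.prod_const]
        by_cases hW : W.filter (fun l => l < i) = ∅
        · rw [if_pos hW, hW]; simp
        · rw [if_neg hW, zero_pow (by simpa [Finset.card_eq_zero] using hW), zero_mul]
    _ = p i * ∏ l ∈ Finset.univ.filter (fun l => l < i), (1 - p l) := by
        rw [h]
        congr 1
        apply Finset.prod_congr rfl
        intro l _
        ring

lemma prfe_eq {n : ℕ} (p : Fin n → ℝ) (i : Fin n) (α : ℝ) :
    prfe n p i α
      = p i * α * ∏ l ∈ Finset.univ.filter (fun l => l < i), (1 - p l + p l * α) := by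
  classical
  have hn : 0 < n := i.pos
  rw [prfe]
  have e1 : ∀ j : ℕ, Finset.univ.filter (fun W : Finset (Fin n) =>
        i ∈ W ∧ (W.filter (fun l => l < i)).card + 1 = j)
      = (Finset.univ.filter (fun W : Finset (Fin n) => i ∈ W)).filter
          (fun W => (W.filter (fun l => l < i)).card + 1 = j) := by
    intro j; rw [Finset.filter_filter]
  simp only [posProb, e1, Finset.mul_sum]
  have step1 : ∑ j ∈ Finset.Icc 1 n,
      ∑ W ∈ (Finset.univ.filter (fun W : Finset (Fin n) => i ∈ W)).filter
          (fun W => (W.filter (fun l => l < i)).card + 1 = j),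
        α ^ j * worldProb n p W
      = ∑ W ∈ Finset.univ.filter (fun W : Finset (Fin n) => i ∈ W),
          α ^ ((W.filter (fun l => l < i)).card + 1) * worldProb n p W := by
    rw [← Finset.sum_fiberwise_of_maps_to (g := fun W : Finset (Fin n) =>
        (W.filter (fun l => l < i)).card + 1) (t := Finset.Icc 1 n)
        (f := fun W => α ^ ((W.filter (fun l => l < i)).card + 1) * worldProb n p W) ?_]
    · apply Finset.sum_congr rfl
      intro j _
      apply Finset.sum_congr rfl
      intro W hW
      rw [(Finset.mem_filter.mp hW).2]
    · intro W hW
      have hsub : W.filter (fun l => l < i) ⊆ Finset.univ.erase i := by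
        intro l hl
        exact Finset.mem_erase.mpr ⟨ne_of_lt (Finset.mem_filter.mp hl).2, Finset.mem_univ l⟩
      have hcard := Finset.card_le_card hsub
      rw [Finset.card_erase_of_mem (Finset.mem_univ i), Finset.card_univ,
        Fintype.card_fin] at hcard
      show (W.filter (fun l => l < i)).card + 1 ∈ Finset.Icc 1 n
      rw [Finset.mem_Icc]
      refine ⟨by omega, by omega⟩
  rw [step1]
  calc ∑ W ∈ Finset.univ.filter (fun W : Finset (Fin n) => i ∈ W),
        α ^ ((W.filter (fun l => l < i)).card + 1) * worldProb n p W
      = α * ∑ W ∈ Finset.univ.filter (fun W : Finset (Fin n) => i ∈ W),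
          (∏ l ∈ W.filter (fun l => l < i), α) * worldProb n p W := by
        rw [Finset.mul_sum]
        apply Finset.sum_congr rfl
        intro W _
        rw [Finset.prod_const, pow_succ]
        ring
    _ = α * (p i * ∏ l ∈ Finset.univ.filter (fun l => l < i), (p l * α + (1 - p l))) := by
        rw [prfe_master p i (fun _ => α)]
    _ = p i * α * ∏ l ∈ Finset.univ.filter (fun l => l < i), (1 - p l + p l * α) := by
        rw [show ∏ l ∈ Finset.univ.filter (fun l => l < i), (p l * α + (1 - p l))
          = ∏ l ∈ Finset.univ.filter (fun l => l < i), (1 - p l + p l * α) from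
          Finset.prod_congr rfl (fun l _ => by ring)]
        ring

lemma prfe_prod_split {n : ℕ} {i j : Fin n} (hij : i < j) (f : Fin n → ℝ) :
    ∏ l ∈ Finset.univ.filter (fun l => l < j), f l
    = (∏ l ∈ Finset.univ.filter (fun l => l < i), f l) *
      ∏ l ∈ Finset.univ.filter (fun l => i ≤ l ∧ l < j), f l := by
  classical
  rw [← Finset.prod_union (by
    rw [Finset.disjoint_left]
    intro l h1 h2
    exact absurd (Finset.mem_filter.mp h1).2 (not_lt.mpr (Finset.mem_filter.mp h2).2.1))]
  apply Finset.prod_congr ?_ (fun _ _ => rfl)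
  ext l
  simp only [Finset.mem_union, Finset.mem_filter, Finset.mem_univ, true_and]
  constructor
  · intro h
    by_cases h2 : l < i
    · exact Or.inl h2
    · exact Or.inr ⟨le_of_not_gt h2, h⟩
  · rintro (h | ⟨_, h2⟩)
    · exact lt_trans h hij
    · exact h2

/-- In a tuple-independent probabilistic database, let `t_i` and `t_j` be
distinct tuples such that `t_i` is ranked above `t_j` by top-1 probability but below `t_j`
by existence probability, i.e. `Pr(r(t_i)=1) > Pr(r(t_j)=1)` and `p i < p j`.  Then there
exists exactly one `β ∈ (0,1)` with `Υ_β(t_i) = Υ_β(t_j)`; moreover `Υ_α(t_i) > Υ_α(t_j)`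
for all `α ∈ (0,β)` and `Υ_α(t_i) < Υ_α(t_j)` for all `α ∈ (β,1]`. -/
theorem prfe_unique_crossing
    (n : ℕ) (p : Fin n → ℝ) (hp : ∀ l, 0 ≤ p l ∧ p l ≤ 1)
    (i j : Fin n) (hij : i ≠ j)
    (htop1 : posProb n p j 1 < posProb n p i 1) (hprob : p i < p j) :
    ∃ β ∈ Set.Ioo (0 : ℝ) 1,
      prfe n p i β = prfe n p j β ∧
      (∀ β' ∈ Set.Ioo (0 : ℝ) 1, prfe n p i β' = prfe n p j β' → β' = β) ∧
      (∀ α ∈ Set.Ioo (0 : ℝ) β, prfe n p j α < prfe n p i α) ∧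
      (∀ α ∈ Set.Ioc β 1, prfe n p i α < prfe n p j α) := by
  classical
  have hpi0 : 0 ≤ p i := (hp i).1
  have hij' : i < j := by
    rcases lt_or_gt_of_ne hij with h | h
    · exact h
    · exfalso
      rw [posProb_one, posProb_one, prfe_prod_split h (fun l => 1 - p l)] at htop1
      have hA : 0 ≤ ∏ l ∈ Finset.univ.filter (fun l => l < j), (1 - p l) :=
        Finset.prod_nonneg (fun l _ => by linarith [(hp l).2])
      have hB0 : 0 ≤ ∏ l ∈ Finset.univ.filter (fun l => j ≤ l ∧ l < i), (1 - p l) :=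
        Finset.prod_nonneg (fun l _ => by linarith [(hp l).2])
      have hB1 : ∏ l ∈ Finset.univ.filter (fun l => j ≤ l ∧ l < i), (1 - p l) ≤ 1 :=
        Finset.prod_le_one (fun l _ => by linarith [(hp l).2]) (fun l _ => by linarith [(hp l).1])
      have h1 : p i * ((∏ l ∈ Finset.univ.filter (fun l => l < j), (1 - p l)) *
          ∏ l ∈ Finset.univ.filter (fun l => j ≤ l ∧ l < i), (1 - p l))
          ≤ p i * ∏ l ∈ Finset.univ.filter (fun l => l < j), (1 - p l) := by
        rw [mul_comm (∏ l ∈ Finset.univ.filter (fun l => l < j), (1 - p l))]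
        exact mul_le_mul_of_nonneg_left (mul_le_of_le_one_left hA hB1) hpi0
      have h2 : p i * ∏ l ∈ Finset.univ.filter (fun l => l < j), (1 - p l)
          ≤ p j * ∏ l ∈ Finset.univ.filter (fun l => l < j), (1 - p l) :=
        mul_le_mul_of_nonneg_right hprob.le hA
      linarith
  set S := Finset.univ.filter (fun l => i ≤ l ∧ l < j) with hS
  set G : ℝ → ℝ := fun α => ∏ l ∈ S, (1 - p l + p l * α) with hGdef
  set P : ℝ → ℝ := fun α => ∏ l ∈ Finset.univ.filter (fun l => l < i),
    (1 - p l + p l * α) with hPdef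
  set R : ℝ → ℝ := fun α => p i - p j * G α with hRdef
  have hfac : ∀ l : Fin n, ∀ a : ℝ, 0 ≤ a → a ≤ 1 → a ≤ 1 - p l + p l * a := by
    intro l a ha ha1
    nlinarith [(hp l).1, (hp l).2]
  have hPpos : ∀ a : ℝ, 0 < a → a ≤ 1 → 0 < P a := by
    intro a ha ha1
    exact Finset.prod_pos (fun l _ => lt_of_lt_of_le ha (hfac l a ha.le ha1))
  have hdiff : ∀ a : ℝ, prfe n p i a - prfe n p j a = a * P a * R a := by
    intro a
    rw [prfe_eq, prfe_eq, prfe_prod_split hij' (fun l => 1 - p l + p l * a)]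
    simp only [hRdef, hGdef, hPdef]
    ring
  have hG0 : G 0 = ∏ l ∈ S, (1 - p l) :=
    Finset.prod_congr rfl (fun l _ => by ring)
  have hP0 : P 0 = ∏ l ∈ Finset.univ.filter (fun l => l < i), (1 - p l) :=
    Finset.prod_congr rfl (fun l _ => by ring)
  have hR0 : 0 < R 0 := by
    rw [posProb_one, posProb_one, prfe_prod_split hij' (fun l => 1 - p l)] at htop1
    rw [← hP0, ← hG0] at htop1
    have hP0nonneg : 0 ≤ P 0 := by
      rw [hP0]
      exact Finset.prod_nonneg (fun l _ => by linarith [(hp l).2])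
    have hP0pos : 0 < P 0 := by
      rcases eq_or_lt_of_le hP0nonneg with h | h
      · exfalso
        rw [← h] at htop1
        simp at htop1
      · exact h
    have : p j * G 0 < p i := by
      have h2 : p j * G 0 * P 0 < p i * P 0 := by ring_nf; ring_nf at htop1; linarith
      exact lt_of_mul_lt_mul_right h2 hP0nonneg
    simp only [hRdef]
    linarith
  have hG1 : G 1 = 1 := Finset.prod_eq_one (fun l _ => by ring)
  have hR1 : R 1 < 0 := by
    simp only [hRdef, hG1, mul_one]
    linarith
  have hpj : 0 < p j := lt_of_le_of_lt hpi0 hprob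
  have hl0 : ∃ l0 ∈ S, 0 < p l0 := by
    by_contra hc
    push_neg at hc
    have hG0' : G 0 = 1 := by
      apply Finset.prod_eq_one
      intro l hl
      have : p l = 0 := le_antisymm (hc l hl) (hp l).1
      rw [this]; ring
    rw [hRdef] at hR0
    simp only [hG0', mul_one] at hR0
    linarith
  obtain ⟨l0, hl0S, hl0p⟩ := hl0
  have hGmono : ∀ a b : ℝ, 0 ≤ a → a < b → b ≤ 1 → G a < G b := by
    intro a b ha hab hb1
    by_cases hall : ∀ l ∈ S, 0 < 1 - p l + p l * a
    · exact Finset.prod_lt_prod hall (fun l _ => by nlinarith [(hp l).1])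
        ⟨l0, hl0S, by nlinarith⟩
    · push_neg at hall
      obtain ⟨l1, hl1S, hl1⟩ := hall
      have ha1 : a ≤ 1 := le_of_lt (lt_of_lt_of_le hab hb1)
      have h0 : 1 - p l1 + p l1 * a = 0 :=
        le_antisymm hl1 (le_trans ha (hfac l1 a ha ha1))
      have hGa : G a = 0 := Finset.prod_eq_zero hl1S h0
      have hGb : 0 < G b :=
        Finset.prod_pos (fun l _ =>
          lt_of_lt_of_le (lt_of_le_of_lt ha hab) (hfac l b (by linarith) hb1))
      rw [hGa]; exact hGb
  have hRanti : ∀ a b : ℝ, 0 ≤ a → a < b → b ≤ 1 → R b < R a := by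
    intro a b ha hab hb1
    have := hGmono a b ha hab hb1
    simp only [hRdef]
    nlinarith
  have hcont : ContinuousOn R (Set.Icc (0:ℝ) 1) := by
    apply Continuous.continuousOn
    simp only [hRdef, hGdef]
    exact continuous_const.sub (continuous_const.mul
      (continuous_finset_prod S (fun l _ => by continuity)))
  have hmem : (0 : ℝ) ∈ Set.Ioo (R 1) (R 0) := ⟨hR1, hR0⟩
  obtain ⟨β, hβmem, hβ⟩ := intermediate_value_Ioo' (by norm_num : (0:ℝ) ≤ 1) hcont hmem
  refine ⟨β, hβmem, ?_, ?_, ?_, ?_⟩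
  · have hd := hdiff β
    rw [hβ, mul_zero] at hd
    linarith
  · intro β' hβ' heq
    have hd := hdiff β'
    rw [heq, sub_self] at hd
    have hPβ' := hPpos β' hβ'.1 hβ'.2.le
    have hRβ' : R β' = 0 := by
      rcases mul_eq_zero.mp hd.symm with h | h
      · rcases mul_eq_zero.mp h with h | h
        · exact absurd h (ne_of_gt hβ'.1)
        · exact absurd h (ne_of_gt hPβ')
      · exact h
    by_contra hne
    rcases lt_or_gt_of_ne hne with h | h
    · have := hRanti β' β hβ'.1.le h hβmem.2.le
      rw [hβ, hRβ'] at this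
      exact lt_irrefl _ this
    · have := hRanti β β' hβmem.1.le h hβ'.2.le
      rw [hβ, hRβ'] at this
      exact lt_irrefl _ this
  · intro α hα
    have hRα : 0 < R α := by
      have := hRanti α β hα.1.le hα.2 hβmem.2.le
      rw [hβ] at this
      linarith
    have hd := hdiff α
    have hPα := hPpos α hα.1 (le_of_lt (lt_of_lt_of_le hα.2 hβmem.2.le))
    have := mul_pos (mul_pos hα.1 hPα) hRα
    linarith
  · intro α hα
    have hRα : R α < 0 := by
      have := hRanti β α hβmem.1.le hα.1 hα.2
      rw [hβ] at this
      linarith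
    have hd := hdiff α
    have hPα := hPpos α (lt_trans hβmem.1 hα.1) hα.2
    have := mul_neg_of_pos_of_neg (mul_pos (lt_trans hβmem.1 hα.1) hPα) hRα
    linarith
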